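/- Let N be an integer and p a prime dividing N exactly once, with N/p > e. Then G(N) > G(N/p) if and only if (p+1)·(log p)·(1 + Σ_{k≥1} (1/(k+1))·(log p/log N)^k) < log N · log log N. -/

import Mathlib

lemma aux9 (p S M L l b c : ℝ) (hS0 : 0 < S) (hM0 : 0 < M) (hb0 : 0 < b)
    (hp0 : 0 < p) (hc : l = L + c) :
    S * (p * M * L) < (p + 1) * S * (M * l) ↔ (p + 1) * b * (-c) < b * L := by
  subst hc
  constructor
  · intro h
    have h2 : 0 < L + (p + 1) * c := by nlinarith [mul_pos hS0 hM0]
    nlinarith [mul_pos hb0 h2]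
  · intro h
    have h2 : 0 < L + (p + 1) * c := by nlinarith
    nlinarith [mul_pos (mul_pos hS0 hM0) h2]

/-- `G n = σ(n) / (n * log log n)`. -/
noncomputable def G (n : ℕ) : ℝ :=
  (∑ d ∈ n.divisors, (d : ℝ)) / (n * Real.log (Real.log n))

theorem stmt_9 (N p : ℕ) (hp : p.Prime) (hpN : p ∣ N) (hp2 : ¬ p ^ 2 ∣ N)
    (hNp : Real.log (Real.log (N / p : ℕ)) > 0) :
    G N > G (N / p) ↔
      ((p : ℝ) + 1) * Real.log p *
          (1 + ∑' k : ℕ, (1 / ((k : ℝ) + 2)) * (Real.log p / Real.log N) ^ (k + 1)) <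
        Real.log N * Real.log (Real.log N) := by
  set M := N / p with hMdef
  have hpm : p * M = N := Nat.mul_div_cancel' hpN
  have hlogM_nonneg : (0:ℝ) ≤ Real.log M := Real.log_natCast_nonneg M
  have hlM : 1 < Real.log M := by
    by_contra h
    push_neg at h
    have := Real.log_nonpos hlogM_nonneg h
    linarith
  have hM1 : 1 < (M:ℝ) := by
    by_contra h
    push_neg at h
    have : Real.log M ≤ 0 := Real.log_nonpos (by positivity) h
    linarith
  have hM1' : 1 < M := by exact_mod_cast hM1
  have hM0 : M ≠ 0 := by omega
  have hcop : Nat.Coprime p M := by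
    rw [hp.coprime_iff_not_dvd]
    intro hdvd
    exact hp2 (by rw [← hpm, pow_two]; exact mul_dvd_mul_left p hdvd)
  have hp1 : (1:ℝ) < p := by exact_mod_cast hp.one_lt
  set a := Real.log p with ha
  set b := Real.log N with hb
  have hbab : b = a + Real.log M := by
    rw [hb, ha, ← hpm]
    push_cast
    rw [Real.log_mul (by positivity) (by positivity)]
  have ha0 : 0 < a := Real.log_pos hp1
  have hab : a < b := by linarith
  have hb0 : 0 < b := by linarith
  set x := a / b with hx
  have hx0 : 0 < x := by positivity
  have hx1 : x < 1 := (div_lt_one hb0).mpr hab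
  have h1x : 0 < 1 - x := by linarith
  set S := ∑ d ∈ M.divisors, (d : ℝ) with hS
  have hS0 : 0 < S := by
    apply Finset.sum_pos
    · intro d hd
      exact_mod_cast Nat.pos_of_mem_divisors hd
    · exact ⟨1, Nat.one_mem_divisors.mpr hM0⟩
  have hsumN : ∑ d ∈ N.divisors, (d : ℝ) = ((p:ℝ) + 1) * S := by
    have h1 : ∑ d ∈ N.divisors, d = (∑ d ∈ p.divisors, d) * ∑ d ∈ M.divisors, d := by
      rw [← hpm]; exact Nat.Coprime.sum_divisors_mul hcop
    have h2 : ∑ d ∈ p.divisors, d = 1 + p := by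
      rw [Nat.Prime.divisors hp]
      simp [Finset.sum_pair (Nat.Prime.ne_one hp).symm]
    rw [h2] at h1
    calc ∑ d ∈ N.divisors, (d:ℝ) = (((∑ d ∈ N.divisors, d : ℕ)) : ℝ) := by push_cast; rfl
      _ = (((1 + p) * ∑ d ∈ M.divisors, d : ℕ) : ℝ) := by rw [h1]
      _ = ((p:ℝ) + 1) * S := by rw [hS]; push_cast; ring
  set L := Real.log b with hL
  set l := Real.log (Real.log M) with hl
  have hL0 : 0 < L := Real.log_pos (by linarith)
  have hl0 : 0 < l := hNp
  set c := Real.log (1 - x) with hcdef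
  have hc : l = L + c := by
    have h1 : Real.log M = b * (1 - x) := by
      rw [hx, mul_sub, mul_one, mul_div_assoc', mul_comm b a, mul_div_assoc, div_self hb0.ne', mul_one]
      linarith
    rw [hl, h1, Real.log_mul (by positivity) (by positivity), hL]
  clear_value M a b x S L l c
  clear hMdef hNp hp2 hpN hcop hp
  -- the series
  have hsum : HasSum (fun n : ℕ => x ^ (n + 1) / (n + 1)) (-c) := by
    rw [hcdef]
    exact Real.hasSum_pow_div_log_of_abs_lt_one (by rw [abs_of_pos hx0]; exact hx1)
  have hsumA : HasSum (fun n : ℕ => x ^ (n + 1 + 1) / ((↑(n + 1) : ℝ) + 1)) (-c - x) := by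
    apply (hasSum_nat_add_iff (f := fun n : ℕ => x ^ (n + 1) / (n + 1)) 1).mpr
    convert hsum using 1
    rfl
    rw [Finset.sum_range_one]
    norm_num
  have hsum4 : HasSum (fun n : ℕ => (1 / ((n : ℝ) + 2)) * x ^ (n + 1)) ((-c - x) / x) := by
    have hsum3 : HasSum (fun n : ℕ => (1 / ((n : ℝ) + 2)) * x ^ (n + 1) * x) (-c - x) := by
      convert hsumA using 2 with n
      push_cast
      field_simp
      ring
    have h := hsum3.div_const x
    simpa [mul_div_assoc, div_self hx0.ne'] using h
  rw [hsum4.tsum_eq]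
  -- key identity
  have hab' : a = x * b := by
    rw [hx]
    field_simp
  have heq : ((p:ℝ) + 1) * a * (1 + (-c - x) / x) = ((p:ℝ) + 1) * b * (-c) := by
    rw [hab']
    field_simp
    ring
  rw [heq]
  -- G values
  have hNcast : (N:ℝ) = (p:ℝ) * M := by rw [← hpm]; push_cast; ring
  have hGN : G N = (((p:ℝ) + 1) * S) / (((p:ℝ) * M) * L) := by
    unfold G
    rw [hsumN, ← hb, ← hL, hNcast]
  have hGM : G M = S / (M * l) := by unfold G; rw [← hS, ← hl]
  rw [hGN, hGM]
  have hMpos : (0:ℝ) < M := by positivity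
  have hppos : (0:ℝ) < p := by linarith
  rw [gt_iff_lt, div_lt_div_iff₀ (by positivity) (by positivity)]
  exact aux9 p S M L l b c hS0 hMpos hb0 hppos hc
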